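/- If X is a Urysohn space with a regular G_δ-diagonal, then |X| ≤ aL(X)^ω, where aL(X) is the almost Lindelöf number. -/

import Mathlib

open Set Cardinal

universe u

/-- `X` is a Urysohn space: distinct points have disjoint closed neighborhoods. -/
def IsUrysohn (X : Type u) [TopologicalSpace X] : Prop :=
  ∀ x y : X, x ≠ y → ∃ U V : Set X, IsOpen U ∧ IsOpen V ∧ x ∈ U ∧ y ∈ V ∧
    closure U ∩ closure V = ∅

/-- `X` has a regular `G_κ`-diagonal: the diagonal is the intersection of (at most) `κ` many
open sets of `X × X` and also of their closures. -/
def HasRegularGDiagonal (X : Type u) [TopologicalSpace X] (κ : Cardinal.{u}) : Prop :=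
  ∃ (ι : Type u) (W : ι → Set (X × X)), #ι ≤ κ ∧ (∀ i, IsOpen (W i)) ∧
    Set.diagonal X = ⋂ i, W i ∧ Set.diagonal X = ⋂ i, closure (W i)

/-- `𝒰` is an open cover of `X`. -/
def IsOpenCover {X : Type u} [TopologicalSpace X] (𝒰 : Set (Set X)) : Prop :=
  (∀ U ∈ 𝒰, IsOpen U) ∧ ⋃₀ 𝒰 = Set.univ

/-- the star of a set `G` with respect to a family `𝒰`. -/
def star {X : Type u} (G : Set X) (𝒰 : Set (Set X)) : Set X :=
  ⋃₀ {U ∈ 𝒰 | (U ∩ G).Nonempty}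

/-- the star of a point `x` with respect to a family `𝒰`. -/
def starPoint {X : Type u} (x : X) (𝒰 : Set (Set X)) : Set X :=
  ⋃₀ {U ∈ 𝒰 | x ∈ U}

/-- the cellularity of `X` is at most `κ`. -/
def CellularityLE (X : Type u) [TopologicalSpace X] (κ : Cardinal.{u}) : Prop :=
  ∀ 𝒰 : Set (Set X), (∀ U ∈ 𝒰, IsOpen U ∧ U.Nonempty) →
    𝒰.PairwiseDisjoint id → #𝒰 ≤ κ

/-- the weak Lindelöf number of `X` is at most `κ`. -/
def WeakLindelofLE (X : Type u) [TopologicalSpace X] (κ : Cardinal.{u}) : Prop :=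
  ∀ 𝒰 : Set (Set X), IsOpenCover 𝒰 → ∃ 𝒱 ⊆ 𝒰, #𝒱 ≤ κ ∧ Dense (⋃₀ 𝒱)

/-- the almost Lindelöf number of `X` is at most `κ`. -/
def AlmostLindelofLE (X : Type u) [TopologicalSpace X] (κ : Cardinal.{u}) : Prop :=
  ∀ 𝒰 : Set (Set X), IsOpenCover 𝒰 →
    ∃ 𝒱 ⊆ 𝒰, #𝒱 ≤ κ ∧ ⋃ U ∈ 𝒱, closure U = Set.univ

/-- the Lindelöf number of `X` is at most `κ`. -/
def LindelofLE (X : Type u) [TopologicalSpace X] (κ : Cardinal.{u}) : Prop :=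
  ∀ 𝒰 : Set (Set X), IsOpenCover 𝒰 → ∃ 𝒱 ⊆ 𝒰, #𝒱 ≤ κ ∧ ⋃₀ 𝒱 = Set.univ

/-- the character of `X` is at most `κ`. -/
def CharacterLE (X : Type u) [TopologicalSpace X] (κ : Cardinal.{u}) : Prop :=
  ∀ x : X, ∃ B : Set (Set X), #B ≤ κ ∧ (∀ U ∈ B, IsOpen U ∧ x ∈ U) ∧
    ∀ V : Set X, IsOpen V → x ∈ V → ∃ U ∈ B, U ⊆ V

theorem statement14 {X : Type u} [TopologicalSpace X] [T1Space X] (hX : IsUrysohn X)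
    (τ : Cardinal.{u}) (hτ : ℵ₀ ≤ τ)
    (hd : HasRegularGDiagonal X ℵ₀) (ha : AlmostLindelofLE X τ) :
    #X ≤ τ ^ (ℵ₀ : Cardinal.{u}) := by
  classical
  obtain ⟨ι, W, hι, hWo, hW1, hW2⟩ := hd
  -- choose, for each i and z, an open square neighborhood inside W i
  have hU : ∀ i (z : X), ∃ u : Set X, IsOpen u ∧ z ∈ u ∧ u ×ˢ u ⊆ W i := by
    intro i z
    have hz : (z, z) ∈ W i := by
      have hmem : (z, z) ∈ Set.diagonal X := rfl
      rw [hW1] at hmem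
      exact Set.mem_iInter.1 hmem i
    rcases isOpen_prod_iff.1 (hWo i) z z hz with ⟨u, v, hu, hv, hzu, hzv, huv⟩
    exact ⟨u ∩ v, hu.inter hv, ⟨hzu, hzv⟩, fun p hp => huv ⟨hp.1.1, hp.2.2⟩⟩
  choose U hUo hUz hUsq using hU
  -- the covers 𝒰 i
  have hcov : ∀ i, IsOpenCover (Set.range (U i)) := by
    intro i
    constructor
    · rintro V ⟨z, rfl⟩; exact hUo i z
    · ext x
      simp only [Set.mem_sUnion, Set.mem_univ, iff_true]
      exact ⟨U i x, ⟨x, rfl⟩, hUz i x⟩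
  have h𝒱 : ∀ i, ∃ 𝒱 ⊆ Set.range (U i), #𝒱 ≤ τ ∧ ⋃ V ∈ 𝒱, closure V = Set.univ :=
    fun i => ha _ (hcov i)
  choose 𝒱 h𝒱sub h𝒱card h𝒱cov using h𝒱
  -- the key separation property
  have key : ∀ x y : X, x ≠ y → ∃ i, ∀ V ∈ Set.range (U i),
      x ∈ closure V → y ∉ closure V := by
    intro x y hxy
    have hxyd : (x, y) ∉ ⋂ i, closure (W i) := by
      rw [← hW2]
      exact fun h => hxy h
    simp only [Set.mem_iInter, not_forall] at hxyd
    obtain ⟨i, hi⟩ := hxyd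
    refine ⟨i, ?_⟩
    have hopen : IsOpen (closure (W i))ᶜ := isClosed_closure.isOpen_compl
    rcases isOpen_prod_iff.1 hopen x y hi with ⟨A, B, hA, hB, hxA, hyB, hAB⟩
    rintro V ⟨z, rfl⟩ hxV hyV
    obtain ⟨a, haA, haV⟩ := (mem_closure_iff.1 hxV) A hA hxA
    obtain ⟨b, hbB, hbV⟩ := (mem_closure_iff.1 hyV) B hB hyB
    have hab : (a, b) ∈ W i := hUsq i z ⟨haV, hbV⟩
    exact hAB (Set.mk_mem_prod haA hbB) (subset_closure hab)
  -- choose for each x and i a member of 𝒱 i whose closure contains x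
  have hfex : ∀ (x : X) (i : ι), ∃ V : (𝒱 i), x ∈ closure (V : Set X) := by
    intro x i
    have hx : x ∈ ⋃ V ∈ 𝒱 i, closure V := by rw [h𝒱cov i]; exact Set.mem_univ x
    simp only [Set.mem_iUnion] at hx
    obtain ⟨V, hV, hxV⟩ := hx
    exact ⟨⟨V, hV⟩, hxV⟩
  choose f hf using hfex
  have finj : Function.Injective f := by
    intro x y hxyeq
    by_contra hxy
    obtain ⟨i, hi⟩ := key x y hxy
    have hx : x ∈ closure ((f x i : Set X)) := hf x i
    have hy : y ∈ closure ((f y i : Set X)) := hf y i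
    rw [← hxyeq] at hy
    exact hi _ (h𝒱sub i (f x i).2) hx hy
  -- cardinality computation
  have h1 : #X ≤ #(∀ i, (𝒱 i)) := Cardinal.mk_le_of_injective finj
  have h2 : #(∀ i, (𝒱 i)) = Cardinal.prod fun i => #(𝒱 i) := Cardinal.mk_pi _
  have h3 : (Cardinal.prod fun i => #(𝒱 i)) ≤ Cardinal.prod fun _ : ι => τ :=
    Cardinal.prod_le_prod _ _ fun i => h𝒱card i
  have h4 : (Cardinal.prod fun _ : ι => τ) = τ ^ #ι := Cardinal.prod_const' ι τ
  have hτ0 : τ ≠ 0 := by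
    intro h
    rw [h] at hτ
    exact (Cardinal.aleph0_ne_zero) (le_antisymm (le_of_le_of_eq hτ rfl) zero_le ▸ rfl)
  have h5 : τ ^ #ι ≤ τ ^ (ℵ₀ : Cardinal.{u}) :=
    Cardinal.power_le_power_left hτ0 hι
  calc #X ≤ #(∀ i, (𝒱 i)) := h1
    _ = Cardinal.prod fun i => #(𝒱 i) := h2
    _ ≤ Cardinal.prod fun _ : ι => τ := h3
    _ = τ ^ #ι := h4
    _ ≤ τ ^ (ℵ₀ : Cardinal.{u}) := h5
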